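/- Let k be a field and F : C → D a k-linear functor between small k-linear categories. For every object x of C there is an isomorphism of D-modules F^!(D C(x,-)) ≅ D D(F(x),-); that is, the functor y ↦ Hom_{Mod C}(Hom_D(F(-), y), D C(x,-)) is naturally isomorphic (in y) to the functor y ↦ Hom_k(D(F(x), y), k). -/

import Mathlib

open CategoryTheory CategoryTheory.Limits Opposite

/-- The opposite of a `k`-linear category is `k`-linear. -/
noncomputable instance oppositeLinear (k : Type) [Field k] (C : Type) [SmallCategory C]
    [Preadditive C] [Linear k C] : Linear k Cᵒᵖ where
  homModule X Y := Equiv.module k (opEquiv X Y)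
  smul_comp _ _ _ _ _ _ := Quiver.Hom.unop_inj (Linear.comp_smul _ _ _ _ _ _)
  comp_smul _ _ _ _ _ _ := Quiver.Hom.unop_inj (Linear.smul_comp _ _ _ _ _ _)

variable (k : Type) [Field k]

/-- The `C`-module `D C(x,-) : y ↦ Hom_k(C(x,y), k)`. -/
noncomputable def DCoyo (C : Type) [SmallCategory C] [Preadditive C] [Linear k C] (x : C) :
    Cᵒᵖ ⥤ ModuleCat.{0} k where
  obj y := ModuleCat.of k (Module.Dual k (x ⟶ y.unop))
  map {y y'} f := ModuleCat.ofHom <| LinearMap.dualMap (Linear.rightComp k x f.unop)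
  map_id y := by
    refine ModuleCat.hom_ext <| LinearMap.ext fun (φ : Module.Dual k (x ⟶ y.unop)) => LinearMap.ext fun g => ?_
    show φ (g ≫ 𝟙 y.unop) = φ g
    rw [Category.comp_id]
  map_comp {y y' y''} f g := by
    refine ModuleCat.hom_ext <| LinearMap.ext fun (φ : Module.Dual k (x ⟶ y.unop)) => LinearMap.ext fun h => ?_
    show φ (h ≫ (g.unop ≫ f.unop)) = φ ((h ≫ g.unop) ≫ f.unop)
    rw [Category.assoc]

variable {C D : Type} [SmallCategory C] [SmallCategory D]
  [Preadditive C] [Preadditive D] [Linear k C] [Linear k D]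

/-- The functor `F^! : Mod C ⥤ Mod D`, given by
`F^!(M)(y) = Hom_{Mod C}(Hom_D(F(-), y), M)`. -/
noncomputable def Fshriek (F : C ⥤ D) :
    (Cᵒᵖ ⥤ ModuleCat.{0} k) ⥤ (Dᵒᵖ ⥤ ModuleCat.{0} k) :=
  linearYoneda k (Cᵒᵖ ⥤ ModuleCat.{0} k) ⋙
    (Functor.whiskeringLeft Dᵒᵖ (Cᵒᵖ ⥤ ModuleCat.{0} k)ᵒᵖ (ModuleCat.{0} k)).obj
      (linearYoneda k D ⋙ (Functor.whiskeringLeft Cᵒᵖ Dᵒᵖ (ModuleCat.{0} k)).obj F.op).op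

/-- For every `x : C` there is an isomorphism of `D`-modules
`F^!(D C(x,-)) ≅ D D(F(x),-)`. -/

noncomputable def shriekEquiv (F : C ⥤ D) [F.Additive] [F.Linear k] (x : C) (y : Dᵒᵖ) :
    ((F.op ⋙ (linearYoneda k D).obj y.unop) ⟶ DCoyo k C x) ≃ₗ[k]
      Module.Dual k (F.obj x ⟶ y.unop) where
  toFun η :=
    (LinearMap.applyₗ (𝟙 x) : Module.Dual k (x ⟶ x) →ₗ[k] k).comp
      ((η.app (op x)).hom : (F.obj x ⟶ y.unop) →ₗ[k] Module.Dual k (x ⟶ x))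
  map_add' η η' := rfl
  map_smul' a η := rfl
  invFun φ :=
    { app := fun c => ModuleCat.ofHom <| show (F.obj c.unop ⟶ y.unop) →ₗ[k] Module.Dual k (x ⟶ c.unop) from
        { toFun := fun g =>
            { toFun := fun h => φ (F.map h ≫ g)
              map_add' := fun h h' => by
                show φ (F.map (h + h') ≫ g) = φ (F.map h ≫ g) + φ (F.map h' ≫ g)
                rw [F.map_add, Preadditive.add_comp, map_add]
              map_smul' := fun a h => by
                show φ (F.map (a • h) ≫ g) = a • φ (F.map h ≫ g)
                rw [F.map_smul, Linear.smul_comp, map_smul] }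
          map_add' := fun g g' => by
            refine LinearMap.ext fun h => ?_
            show φ (F.map h ≫ (g + g')) = φ (F.map h ≫ g) + φ (F.map h ≫ g')
            rw [Preadditive.comp_add, map_add]
          map_smul' := fun a g => by
            refine LinearMap.ext fun h => ?_
            show φ (F.map h ≫ (a • g)) = a • φ (F.map h ≫ g)
            rw [Linear.comp_smul, map_smul] }
      naturality := fun c c' f => by
        refine ModuleCat.hom_ext <| LinearMap.ext fun g => LinearMap.ext fun h => ?_
        show φ (F.map h ≫ F.map f.unop ≫ g) = φ (F.map (h ≫ f.unop) ≫ g)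
        rw [F.map_comp]; exact congrArg φ (Category.assoc _ _ (g : F.obj c.unop ⟶ y.unop)).symm }
  left_inv η := by
    refine NatTrans.ext (funext fun c => ModuleCat.hom_ext <| LinearMap.ext fun g => LinearMap.ext fun h => ?_)
    have nat := congrArg
      (fun (ψ : (F.op ⋙ (linearYoneda k D).obj y.unop).obj c ⟶ (DCoyo k C x).obj (op x)) => DFunLike.coe (F := Module.Dual k (x ⟶ x)) (ψ.hom g) (𝟙 x))
      (η.naturality h.op)
    exact nat.trans (LinearMap.congr_arg
      (f := show (x ⟶ c.unop) →ₗ[k] k from (η.app c).hom g) (Category.id_comp h))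
  right_inv φ := by
    refine LinearMap.ext fun g => ?_
    show φ (F.map (𝟙 x) ≫ g) = φ g
    rw [F.map_id, Category.id_comp]

theorem shriek_of_dual_coyoneda (F : C ⥤ D) [F.Additive] [F.Linear k] (x : C) :
    Nonempty ((Fshriek k F).obj (DCoyo k C x) ≅ DCoyo k D (F.obj x)) := by
  refine ⟨NatIso.ofComponents (fun y => (shriekEquiv k F x y).toModuleIso) fun {y y'} f => ?_⟩
  refine ModuleCat.hom_ext <| LinearMap.ext fun η => ?_
  rfl
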